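/- arXiv:2010.10973 — 2 statements merged into one kernel-verified Lean document; each statement's English description precedes it below -/
import Mathlib

section
/- Let k be a bounded scalar kernel on X with k(x₀,x₀) = 1 for some x₀, let Y be an infinite-dimensional separable Hilbert space, and let K(x,x') = k(x,x')·Id_Y. Then the inclusion ι : H → L²(X, P_X; Y) of the associated vector-valued RKHS is not a compact operator, provided E[k(x₀,X)²] > 0. -/
open MeasureTheory ContinuousLinearMap
open scoped RealInnerProductSpace

/-- Let `k` be a bounded scalar kernel with `k(x₀,x₀) = 1`, `Y` an
infinite-dimensional separable Hilbert space, and `K(x,x') = k(x,x')·Id_Y` (expressed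
through the evaluation operators by `ev x ((ev x')^* y) = k x x' • y`).  If
`E[k(x₀,X)²] > 0`, then the inclusion `ι : H → L²(X,P_X;Y)` is not a compact operator. -/
theorem stmt5 {X H Y : Type*}
    [NormedAddCommGroup H] [InnerProductSpace ℝ H] [CompleteSpace H]
    [NormedAddCommGroup Y] [InnerProductSpace ℝ Y] [CompleteSpace Y]
    [TopologicalSpace.SeparableSpace Y]
    (hY : ¬ FiniteDimensional ℝ Y)
    [MeasurableSpace X] (μ : Measure X) [IsProbabilityMeasure μ]
    (ev : X → H →L[ℝ] Y)
    (k : X → X → ℝ) (Cb : ℝ) (hk : ∀ x x' : X, |k x x'| ≤ Cb)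
    (hK : ∀ (x x' : X) (y : Y), ev x (ContinuousLinearMap.adjoint (ev x') y) = k x x' • y)
    (x₀ : X) (hx₀ : k x₀ x₀ = 1)
    (hpos : 0 < ∫ x, (k x₀ x) ^ 2 ∂μ)
    (ι : H →L[ℝ] Lp Y 2 μ)
    (hι : ∀ f : H, (ι f : X → Y) =ᵐ[μ] fun x => ev x f) :
    ¬ IsCompactOperator (fun f : H => ι f) := by
  classical
  -- an orthonormal sequence in Y
  obtain ⟨w, b, hb⟩ := exists_hilbertBasis ℝ Y
  have hw : w.Infinite := by
    by_contra hfin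
    rw [Set.not_infinite] at hfin
    apply hY
    have h1 : (Submodule.span ℝ (Set.range ⇑b)).topologicalClosure = ⊤ := b.dense_span
    rw [hb, Subtype.range_coe] at h1
    have hfd : FiniteDimensional ℝ (Submodule.span ℝ w) :=
      FiniteDimensional.span_of_finite ℝ hfin
    have hcl : (Submodule.span ℝ w).topologicalClosure = Submodule.span ℝ w :=
      IsClosed.submodule_topologicalClosure_eq (Submodule.closed_of_finiteDimensional _)
    rw [hcl] at h1
    have : FiniteDimensional ℝ (⊤ : Submodule ℝ Y) := h1 ▸ hfd
    exact (Submodule.topEquiv (R := ℝ) (M := Y)).finiteDimensional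
  set y : ℕ → Y := fun n => ((Set.Infinite.natEmbedding w hw n : w) : Y) with hy
  have hon : Orthonormal ℝ y := by
    have hbo : Orthonormal ℝ ((↑) : w → Y) := hb ▸ b.orthonormal
    exact hbo.comp _ (Set.Infinite.natEmbedding w hw).injective
  -- symmetry of k
  have hsymm : ∀ x x' : X, k x x' = k x' x := by
    intro x x'
    have hval : ∀ a a' : X, ⟪ev a ((ContinuousLinearMap.adjoint (ev a')) (y 0)), y 0⟫ = k a a' := by
      intro a a'
      rw [hK, real_inner_smul_left, real_inner_self_eq_norm_sq, hon.1 0]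
      ring
    have h2 : ⟪ev x ((ContinuousLinearMap.adjoint (ev x')) (y 0)), y 0⟫
        = ⟪ev x' ((ContinuousLinearMap.adjoint (ev x)) (y 0)), y 0⟫ := by
      rw [← ContinuousLinearMap.adjoint_inner_right (ev x),
        ContinuousLinearMap.adjoint_inner_left (ev x'), real_inner_comm]
    rw [← hval x x', h2, hval x' x]
  set c : ℝ := ∫ x, (k x₀ x) ^ 2 ∂μ with hc
  set f : ℕ → H := fun n => (ContinuousLinearMap.adjoint (ev x₀)) (y n) with hf
  set M : ℝ := ‖ContinuousLinearMap.adjoint (ev x₀)‖ with hM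
  have hMnn : 0 ≤ M := norm_nonneg _
  have hfb : ∀ n, ‖f n‖ ≤ M := by
    intro n
    calc ‖f n‖ ≤ M * ‖y n‖ := le_opNorm _ _
      _ = M := by rw [hon.1 n, mul_one]
  -- the key distance computation
  have key : ∀ i j : ℕ, i ≠ j → ‖ι (f i) - ι (f j)‖ ^ 2 = 2 * c := by
    intro i j hij
    have h1 : ι (f i) - ι (f j) = ι (f i - f j) := (map_sub ι _ _).symm
    rw [h1]
    have h2 : (↑(ι (f i - f j)) : X → Y) =ᵐ[μ] fun x => k x x₀ • (y i - y j) := by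
      filter_upwards [hι (f i - f j)] with x hx
      rw [hx]
      show ev x (f i - f j) = _
      rw [show f i - f j = (ContinuousLinearMap.adjoint (ev x₀)) (y i - y j) from
        (map_sub _ _ _).symm, hK]
    have hnorm2 : ‖y i - y j‖ ^ 2 = 2 := by
      rw [norm_sub_sq_real, hon.1 i, hon.1 j, hon.2 hij]
      ring
    calc ‖ι (f i - f j)‖ ^ 2 = ⟪ι (f i - f j), ι (f i - f j)⟫ :=
          (real_inner_self_eq_norm_sq _).symm
      _ = ∫ x, ⟪(↑(ι (f i - f j)) : X → Y) x, (↑(ι (f i - f j)) : X → Y) x⟫ ∂μ :=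
          L2.inner_def _ _
      _ = ∫ x, (k x x₀) ^ 2 * 2 ∂μ := by
          refine integral_congr_ae ?_
          filter_upwards [h2] with x hx
          rw [hx, real_inner_smul_left, real_inner_smul_right, real_inner_self_eq_norm_sq,
            hnorm2]
          ring
      _ = 2 * c := by
          rw [integral_mul_const]
          have : (∫ x, (k x x₀) ^ 2 ∂μ) = c := by
            rw [hc]
            exact integral_congr_ae (Filter.Eventually.of_forall fun x => by simp only [hsymm x x₀])
          rw [this]; ring
  -- now derive the contradiction
  rintro ⟨K, hKc, hKmem⟩
  obtain ⟨ε, hε, hball⟩ := Metric.mem_nhds_iff.mp hKmem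
  set r : ℝ := ε / (2 * (M + 1)) with hr
  have hrpos : 0 < r := div_pos hε (by linarith)
  have hmem : ∀ n, ι (r • f n) ∈ K := by
    intro n
    apply hball
    rw [Metric.mem_ball, dist_zero_right, norm_smul, Real.norm_eq_abs,
      abs_of_pos hrpos]
    calc r * ‖f n‖ ≤ r * (M + 1) := by
          have := hfb n
          nlinarith
      _ = ε / 2 := by rw [hr]; field_simp
      _ < ε := by linarith
  set u : ℕ → Lp Y 2 μ := fun n => ι (r • f n) with hu
  obtain ⟨L, _, φ, hφ, hconv⟩ := hKc.tendsto_subseq hmem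
  have hcauchy := hconv.cauchySeq
  rw [Metric.cauchySeq_iff] at hcauchy
  set d : ℝ := Real.sqrt (r ^ 2 * (2 * c)) with hd
  have hdpos : 0 < d := Real.sqrt_pos.mpr (by positivity)
  obtain ⟨N, hN⟩ := hcauchy d hdpos
  have hne : φ (N + 1) ≠ φ N := (hφ (Nat.lt_succ_self N)).ne'
  have hdist := hN (N + 1) (Nat.le_succ N) N le_rfl
  have hdval : dist (u (φ (N + 1))) (u (φ N)) ^ 2 = r ^ 2 * (2 * c) := by
    rw [dist_eq_norm]
    have : u (φ (N + 1)) - u (φ N) = r • (ι (f (φ (N + 1))) - ι (f (φ N))) := by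
      simp only [hu, _root_.map_smul, smul_sub]
    rw [this, norm_smul, Real.norm_eq_abs, mul_pow, sq_abs, key _ _ hne]
  have hd2 : d ^ 2 = r ^ 2 * (2 * c) := Real.sq_sqrt (by positivity)
  have : dist (u (φ (N + 1))) (u (φ N)) ^ 2 < d ^ 2 := by
    apply pow_lt_pow_left₀ hdist dist_nonneg
    norm_num
  rw [hdval, hd2] at this
  exact lt_irrefl _ this
end

section
/- With K(x,x') = k(x,x')·Id_Y for a bounded scalar kernel k and Y an infinite-dimensional separable Hilbert space, the self-adjoint operator ι∘ι^* : L²(X,P_X;Y) → L²(X,P_X;Y) is not compact, provided E_{X₁}[(E_{X₂}[k(X₁,X₂)])²] > 0. -/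
open MeasureTheory ContinuousLinearMap

set_option maxHeartbeats 1000000 in
/-- With `K(x,x') = k(x,x')·Id_Y` for a bounded scalar kernel `k`
and `Y` an infinite-dimensional separable Hilbert space, the self-adjoint operator
`ι∘ι^* : L²(X,P_X;Y) → L²(X,P_X;Y)` is not compact, provided
`E_{X₁}[(E_{X₂}[k(X₁,X₂)])²] > 0`. -/
theorem stmt6 {X H Y : Type*}
    [NormedAddCommGroup H] [InnerProductSpace ℝ H] [CompleteSpace H]
    [NormedAddCommGroup Y] [InnerProductSpace ℝ Y] [CompleteSpace Y]
    [TopologicalSpace.SeparableSpace Y]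
    (hY : ¬ FiniteDimensional ℝ Y)
    [MeasurableSpace X] (μ : Measure X) [IsProbabilityMeasure μ]
    (ev : X → H →L[ℝ] Y)
    (k : X → X → ℝ) (Cb : ℝ) (hk : ∀ x x' : X, |k x x'| ≤ Cb)
    (hK : ∀ (x x' : X) (y : Y), ev x (ContinuousLinearMap.adjoint (ev x') y) = k x x' • y)
    (hpos : 0 < ∫ x₁, (∫ x₂, k x₁ x₂ ∂μ) ^ 2 ∂μ)
    (ι : H →L[ℝ] Lp Y 2 μ)
    (hι : ∀ f : H, (ι f : X → Y) =ᵐ[μ] fun x => ev x f) :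
    ¬ IsCompactOperator (fun g : Lp Y 2 μ => ι (ContinuousLinearMap.adjoint ι g)) := by
  intro hcmp
  -- orthonormal sequence in Y
  obtain ⟨w, b, hb⟩ := exists_hilbertBasis ℝ Y
  have hw : w.Infinite := by
    by_contra hfin
    rw [Set.not_infinite] at hfin
    apply hY
    have hd := b.dense_span
    rw [hb, Subtype.range_coe] at hd
    have hcl : IsClosed (Submodule.span ℝ w : Set Y) := by
      haveI := FiniteDimensional.span_of_finite ℝ hfin
      exact Submodule.closed_of_finiteDimensional _
    have htop : Submodule.span ℝ w = ⊤ := by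
      rw [← hcl.submodule_topologicalClosure_eq]; exact hd
    haveI := FiniteDimensional.span_of_finite ℝ hfin
    rw [htop] at this
    exact Module.Finite.equiv (Submodule.topEquiv (R := ℝ) (M := Y))
  set e := hw.natEmbedding with he
  set y : ℕ → Y := fun n => (e n : Y) with hy
  have hon : Orthonormal ℝ y := by
    have hbo := b.orthonormal
    rw [hb] at hbo
    exact hbo.comp e e.injective
  have hy1 : ∀ n, ‖y n‖ = 1 := hon.1
  have hy0 : ∀ {i j}, i ≠ j → (inner ℝ (y i) (y j) : ℝ) = 0 := fun hij => hon.2 hij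
  -- symmetry of k
  have ksymm : ∀ x x', k x x' = k x' x := by
    intro x x'
    have h1 : (inner ℝ (ev x (adjoint (ev x') (y 0))) (y 0) : ℝ) = k x x' := by
      rw [hK, real_inner_smul_left, real_inner_self_eq_norm_sq, hy1]; ring
    have h2 : (inner ℝ (ev x (adjoint (ev x') (y 0))) (y 0) : ℝ) = k x' x := by
      rw [← adjoint_inner_right (ev x), real_inner_comm,
        adjoint_inner_right (ev x'), hK, real_inner_smul_left,
        real_inner_self_eq_norm_sq, hy1]; ring
    rw [← h1, h2]
  -- the mean function
  set c : X → ℝ := fun x => ∫ x', k x x' ∂μ with hc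
  -- constant functions in L2
  have hmem : ∀ n, MemLp (fun _ : X => y n) 2 μ := fun n => memLp_const (y n)
  set f : ℕ → Lp Y 2 μ := fun n => (hmem n).toLp _ with hfdef
  have hf : ∀ n, (f n : X → Y) =ᵐ[μ] fun _ => y n := fun n => (hmem n).coeFn_toLp
  -- key computation: ev x (ι* (f n)) = c x • y n
  have key : ∀ (n : ℕ) (x : X), ev x (adjoint ι (f n)) = c x • y n := by
    intro n x
    apply ext_inner_right ℝ
    intro v
    rw [← adjoint_inner_right (ev x), adjoint_inner_left ι,
      MeasureTheory.L2.inner_def]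
    have hae : (fun x' => (inner ℝ ((f n : X → Y) x') ((ι (adjoint (ev x) v) : X → Y) x') : ℝ))
        =ᵐ[μ] fun x' => k x x' • (inner ℝ (y n) v : ℝ) := by
      filter_upwards [hf n, hι (adjoint (ev x) v)] with x' h1 h2
      rw [h1, h2, hK, real_inner_smul_right, ksymm x x', smul_eq_mul]
    rw [integral_congr_ae hae, integral_smul_const, real_inner_smul_left]
    simp [hc, smul_eq_mul]
  have hT : ∀ n, (ι (adjoint ι (f n)) : X → Y) =ᵐ[μ] fun x => c x • y n := by
    intro n
    filter_upwards [hι (adjoint ι (f n))] with x hx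
    rw [hx, key n x]
  -- squared distance between images
  set I : ℝ := ∫ x, (c x) ^ 2 ∂μ with hI
  have hIpos : 0 < I := hpos
  have hdiff : ∀ i j : ℕ, i ≠ j →
      ‖ι (adjoint ι (f i)) - ι (adjoint ι (f j))‖ = Real.sqrt (2 * I) := by
    intro i j hij
    have hsq : ‖ι (adjoint ι (f i)) - ι (adjoint ι (f j))‖ ^ 2 = 2 * I := by
      rw [← real_inner_self_eq_norm_sq, MeasureTheory.L2.inner_def]
      have hae : (fun x => (inner ℝ (((ι (adjoint ι (f i)) - ι (adjoint ι (f j))) : Lp Y 2 μ) x)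
            (((ι (adjoint ι (f i)) - ι (adjoint ι (f j))) : Lp Y 2 μ) x) : ℝ))
          =ᵐ[μ] fun x => 2 * (c x) ^ 2 := by
        filter_upwards [Lp.coeFn_sub (ι (adjoint ι (f i))) (ι (adjoint ι (f j))), hT i, hT j]
          with x hx hi hj
        rw [hx, Pi.sub_apply, hi, hj, ← smul_sub, real_inner_smul_left, real_inner_smul_right]
        have : (inner ℝ (y i - y j) (y i - y j) : ℝ) = 2 := by
          rw [inner_sub_left, inner_sub_right, inner_sub_right,
            real_inner_self_eq_norm_sq, real_inner_self_eq_norm_sq,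
            hy1, hy1, hy0 hij, hy0 (Ne.symm hij)]
          ring
        rw [this]; ring
      rw [integral_congr_ae hae, integral_const_mul]
    have h2I : (0:ℝ) ≤ 2 * I := by linarith
    nlinarith [Real.sq_sqrt h2I, Real.sqrt_nonneg (2 * I),
      norm_nonneg (ι (adjoint ι (f i)) - ι (adjoint ι (f j)))]
  -- norm of f n
  have hfn : ∀ n, ‖f n‖ ≤ 1 := by
    intro n
    have : ‖f n‖ ^ 2 = 1 := by
      rw [← real_inner_self_eq_norm_sq, MeasureTheory.L2.inner_def]
      have hae : (fun x => (inner ℝ ((f n : X → Y) x) ((f n : X → Y) x) : ℝ))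
          =ᵐ[μ] fun _ => (1:ℝ) := by
        filter_upwards [hf n] with x hx
        rw [hx, real_inner_self_eq_norm_sq, hy1]; ring
      rw [integral_congr_ae hae, integral_const]
      simp
    nlinarith [norm_nonneg (f n)]
  -- exploit compactness
  obtain ⟨K, hKc, hKnhds⟩ := hcmp
  obtain ⟨ε, hε, hball⟩ := Metric.mem_nhds_iff.mp hKnhds
  set u : ℕ → Lp Y 2 μ := fun n => (ε/2) • (ι (adjoint ι (f n))) with hu
  have humem : ∀ n, u n ∈ K := by
    intro n
    have hmemball : (ε/2) • f n ∈ Metric.ball (0 : Lp Y 2 μ) ε := by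
      rw [mem_ball_zero_iff, norm_smul, Real.norm_eq_abs, abs_of_pos (by linarith)]
      have := hfn n
      nlinarith
    have := hball hmemball
    simpa [hu, Set.mem_preimage, _root_.map_smul] using this
  set δ : ℝ := (ε/2) * Real.sqrt (2 * I) with hδ
  have hδpos : 0 < δ := by
    apply mul_pos (by linarith)
    exact Real.sqrt_pos.mpr (by linarith)
  have hudist : ∀ i j : ℕ, i ≠ j → dist (u i) (u j) = δ := by
    intro i j hij
    rw [dist_eq_norm, hu]
    simp only
    rw [← smul_sub, norm_smul, Real.norm_eq_abs, abs_of_pos (by linarith : (0:ℝ) < ε/2),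
      hdiff i j hij]
  obtain ⟨p, hp, φ, hφ, hφt⟩ := hKc.tendsto_subseq humem
  obtain ⟨N, hN⟩ := (Metric.tendsto_atTop.mp hφt) (δ/2) (by linarith)
  have h1 := hN N (le_refl N)
  simp only [Function.comp_apply] at h1
  have h2 := hN (N+1) (by omega)
  simp only [Function.comp_apply] at h2
  have hne : φ N ≠ φ (N+1) := by
    intro h
    exact absurd (hφ.injective h) (by omega)
  have := hudist (φ N) (φ (N+1)) hne
  have htri := dist_triangle (u (φ N)) p (u (φ (N+1)))
  rw [this] at htri
  rw [dist_comm] at h2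
  linarith
end
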